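/- The character table Q of any finite group G is ideal: the spectracone C(Q) = { x ∈ ℂⁿ : Q D_x Q⁻¹ ≥ 0 entrywise } equals the conical hull of the rows of Q. -/

import Mathlib

open scoped ComplexOrder
open CategoryTheory
open Matrix
open CategoryTheory.MonoidalCategory

/-- The character table of a finite group: rows indexed by (irreducible) representations,
columns by conjugacy-class representatives. -/
noncomputable def charTable {G : Type} [Group G] {n : ℕ}
    (ρ : Fin n → FDRep ℂ G) (g : Fin n → G) : Matrix (Fin n) (Fin n) ℂ :=
  Matrix.of fun i j => (ρ i).character (g j)

def coniRows {n : ℕ} (S : Matrix (Fin n) (Fin n) ℂ) (x : Fin n → ℂ) : Prop :=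
  ∃ α : Fin n → ℝ, (∀ k, 0 ≤ α k) ∧ x = ∑ k, α k • S k

open scoped Classical in
private lemma charTable_orth {G : Type} [Group G] [Fintype G] (V W : FDRep ℂ G)
    [Simple V] [Simple W] :
    (Fintype.card G : ℂ)⁻¹ * ∑ h : G, V.character h * W.character h⁻¹ =
      if Nonempty (V ≅ W) then 1 else 0 := by
  have hc : (Fintype.card G : ℂ) ≠ 0 := by exact_mod_cast Fintype.card_ne_zero
  haveI : Invertible (Fintype.card G : ℂ) := invertibleOfNonzero hc
  have h := (haveI : Invertible (Nat.card G : ℂ) := invertibleOfNonzero (by rw [← Fintype.card_eq_nat_card]; exact hc); FDRep.char_orthonormal V W)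
  have h2 : (Fintype.card G : ℂ)⁻¹ * ∑ h : G, V.character h * W.character h⁻¹ =
      ⅟(Fintype.card G : ℂ) • ∑ h : G, V.character h * W.character h⁻¹ := by
    rw [smul_eq_mul, invOf_eq_inv]
  refine h2.trans ?_
  rw [smul_eq_mul, invOf_eq_inv, Fintype.card_eq_nat_card]
  exact h.trans (by simp)

private lemma char_avg {G : Type} [Group G] [Fintype G] (V : FDRep ℂ G) :
    (Fintype.card G : ℂ)⁻¹ * ∑ h : G, V.character h =
      (Module.finrank ℂ (Representation.invariants V.ρ) : ℂ) := by
  have hc : (Fintype.card G : ℂ) ≠ 0 := by exact_mod_cast Fintype.card_ne_zero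
  haveI : Invertible (Fintype.card G : ℂ) := invertibleOfNonzero hc
  have h := (haveI : Invertible (Nat.card G : ℂ) := invertibleOfNonzero (by rw [← Fintype.card_eq_nat_card]; exact hc); FDRep.average_char_eq_finrank_invariants V)
  have h2 : (Fintype.card G : ℂ)⁻¹ * ∑ h : G, V.character h =
      ⅟(Fintype.card G : ℂ) • ∑ h : G, V.character h := by
    rw [smul_eq_mul, invOf_eq_inv]
  exact h2.trans (by rw [smul_eq_mul, invOf_eq_inv, Fintype.card_eq_nat_card]; exact h)

private lemma char_isConj {G : Type} [Group G] (V : FDRep ℂ G) {a b : G} (h : IsConj a b) :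
    V.character a = V.character b := by
  obtain ⟨c, hc⟩ := isConj_iff.mp h
  rw [← hc, FDRep.char_conj]

private lemma charTable_left_inv {G : Type} [Group G] [Fintype G] {n : ℕ}
    (ρ : Fin n → FDRep ℂ G) (hsimple : ∀ i, Simple (ρ i))
    (hdistinct : ∀ i j, Nonempty (ρ i ≅ ρ j) → i = j)
    (g : Fin n → G) (cl : G → Fin n) (hcl : ∀ h, IsConj h (g (cl h))) :
    (Matrix.of fun m j => (Fintype.card G : ℂ)⁻¹ *
        ∑ h : G, if cl h = j then (ρ m).character h⁻¹ else 0) * (charTable ρ g)ᵀ = 1 := by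
  classical
  ext m b
  haveI := hsimple m
  haveI := hsimple b
  rw [Matrix.mul_apply, Matrix.one_apply]
  have key : ∑ j, (Matrix.of fun m j => (Fintype.card G : ℂ)⁻¹ *
        ∑ h : G, if cl h = j then (ρ m).character h⁻¹ else 0) m j * (charTable ρ g)ᵀ j b =
      (Fintype.card G : ℂ)⁻¹ * ∑ h : G, (ρ b).character h * (ρ m).character h⁻¹ := by
    simp only [Matrix.of_apply, Matrix.transpose_apply, charTable, mul_assoc]
    rw [← Finset.mul_sum]
    congr 1
    have : ∀ j, (∑ h : G, if cl h = j then (ρ m).character h⁻¹ else 0) * (ρ b).character (g j) =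
        ∑ h : G, if cl h = j then (ρ b).character (g j) * (ρ m).character h⁻¹ else 0 := by
      intro j
      rw [Finset.sum_mul]
      refine Finset.sum_congr rfl fun h _ => ?_
      split_ifs <;> simp [mul_comm]
    simp only [this]
    rw [Finset.sum_comm]
    refine Finset.sum_congr rfl fun h _ => ?_
    rw [Finset.sum_ite_eq Finset.univ (cl h) (fun j => (ρ b).character (g j) * (ρ m).character h⁻¹)]
    simp only [Finset.mem_univ, if_true]
    rw [← char_isConj (ρ b) (hcl h)]
  rw [key, charTable_orth (ρ b) (ρ m)]
  by_cases hbm : m = b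
  · subst hbm; rw [if_pos ⟨Iso.refl _⟩, if_pos rfl]
  · rw [if_neg (fun hn => hbm ((hdistinct b m hn).symm)), if_neg hbm]

private lemma char_decomp {G : Type} [Group G] [Fintype G] {n : ℕ}
    (ρ : Fin n → FDRep ℂ G) (hsimple : ∀ i, Simple (ρ i))
    (hdistinct : ∀ i j, Nonempty (ρ i ≅ ρ j) → i = j)
    (g : Fin n → G) (hgall : ∀ h : G, ∃ i, IsConj h (g i))
    (V : FDRep ℂ G) :
    ∃ c : Fin n → ℝ, (∀ b, 0 ≤ c b) ∧
      ∀ j, V.character (g j) = ∑ b, (c b : ℂ) * charTable ρ g b j := by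
  classical
  choose cl hcl using hgall
  set Q := charTable ρ g with hQ
  set M : Matrix (Fin n) (Fin n) ℂ := Matrix.of fun m j => (Fintype.card G : ℂ)⁻¹ *
        ∑ h : G, if cl h = j then (ρ m).character h⁻¹ else 0 with hM
  have hMQ : M * Qᵀ = 1 := charTable_left_inv ρ hsimple hdistinct g cl hcl
  have hQM : Qᵀ * M = 1 := mul_eq_one_comm.mp hMQ
  set v : Fin n → ℂ := fun j => V.character (g j) with hv
  have hrec : Qᵀ.mulVec (M.mulVec v) = v := by
    rw [Matrix.mulVec_mulVec, hQM, Matrix.one_mulVec]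
  have hcval : ∀ b, M.mulVec v b =
      (Module.finrank ℂ (Representation.invariants
        ((V ⊗ FDRep.of (Representation.dual (ρ b).ρ)).ρ)) : ℂ) := by
    intro b
    have e1 : M.mulVec v b = (Fintype.card G : ℂ)⁻¹ *
        ∑ h : G, (V ⊗ FDRep.of (Representation.dual (ρ b).ρ)).character h := by
      rw [Matrix.mulVec, dotProduct]
      simp only [hM, Matrix.of_apply, mul_assoc]
      rw [← Finset.mul_sum]
      congr 1
      have : ∀ j, (∑ h : G, if cl h = j then (ρ b).character h⁻¹ else 0) * v j =
          ∑ h : G, if cl h = j then v j * (ρ b).character h⁻¹ else 0 := by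
        intro j
        rw [Finset.sum_mul]
        refine Finset.sum_congr rfl fun h _ => ?_
        split_ifs <;> simp [mul_comm]
      simp only [this]
      rw [Finset.sum_comm]
      refine Finset.sum_congr rfl fun h _ => ?_
      rw [Finset.sum_ite_eq Finset.univ (cl h) (fun j => v j * (ρ b).character h⁻¹)]
      simp only [Finset.mem_univ, if_true, hv]
      rw [← char_isConj V (hcl h), FDRep.char_tensor, Pi.mul_apply, FDRep.char_dual]
    rw [e1, char_avg]
  refine ⟨fun b => (Module.finrank ℂ (Representation.invariants
      ((V ⊗ FDRep.of (Representation.dual (ρ b).ρ)).ρ)) : ℝ),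
    fun b => Nat.cast_nonneg _, fun j => ?_⟩
  have := congrFun hrec j
  rw [Matrix.mulVec, dotProduct] at this
  rw [show V.character (g j) = v j from rfl, ← this]
  refine Finset.sum_congr rfl fun b _ => ?_
  rw [hcval b, Matrix.transpose_apply]
  push_cast
  ring

theorem stmt10 {G : Type} [Group G] [Fintype G] {n : ℕ}
    (ρ : Fin n → FDRep ℂ G)
    (hsimple : ∀ i, Simple (ρ i))
    (hdistinct : ∀ i j, Nonempty (ρ i ≅ ρ j) → i = j)
    (hcomplete : ∀ V : FDRep ℂ G, Simple V → ∃ i, Nonempty (V ≅ ρ i))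
    (g : Fin n → G)
    (hgdist : ∀ i j, IsConj (g i) (g j) → i = j)
    (hgall : ∀ h : G, ∃ i, IsConj h (g i)) :
    {x : Fin n → ℂ |
        ∀ a b, 0 ≤ (charTable ρ g * Matrix.diagonal x * (charTable ρ g)⁻¹) a b} =
      {x : Fin n → ℂ | coniRows (charTable ρ g) x} := by
  classical
  set Q := charTable ρ g with hQdef
  -- invertibility of Q
  have hdet : IsUnit Q.det := by
    choose cl hcl using hgall
    have hMQ := charTable_left_inv ρ hsimple hdistinct g cl hcl
    have := Matrix.isUnit_det_of_left_inverse hMQ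
    rwa [Matrix.det_transpose] at this
  have hQQi : Q * Q⁻¹ = 1 := Matrix.mul_nonsing_inv Q hdet
  have hQiQ : Q⁻¹ * Q = 1 := Matrix.nonsing_inv_mul Q hdet
  ext x
  simp only [Set.mem_setOf_eq]
  constructor
  · intro hA
    set A := Q * Matrix.diagonal x * Q⁻¹ with hAdef
    have hQD : Q * Matrix.diagonal x = A * Q := by
      rw [hAdef, Matrix.mul_assoc, hQiQ, Matrix.mul_one]
    -- decomposition of the all-ones vector (character of the trivial rep)
    obtain ⟨cE, hcE0, hcE1⟩ := char_decomp ρ hsimple hdistinct g hgall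
      (FDRep.of (Representation.trivial ℂ (G := G) (V := ℂ)))
    have hones : ∀ j, (1 : ℂ) = ∑ i, (cE i : ℂ) * Q i j := by
      intro j
      have := hcE1 j
      rwa [show (FDRep.of (Representation.trivial ℂ (G := G) (V := ℂ))).character (g j) = 1 by
        have : (FDRep.of (Representation.trivial ℂ (G := G) (V := ℂ))).character (g j)
            = LinearMap.trace ℂ ℂ (Representation.trivial ℂ (G := G) (V := ℂ) (g j)) := rfl
        rw [this]
        have h2 : (Representation.trivial ℂ (G := G) (V := ℂ)) (g j) = LinearMap.id := by
          ext v; simp [Representation.trivial_apply]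
        rw [h2, LinearMap.trace_id]
        simp] at this
    -- coefficients
    have hnn : ∀ b, 0 ≤ ∑ i, (cE i : ℂ) * A i b := by
      intro b
      refine Finset.sum_nonneg fun i _ => mul_nonneg ?_ (hA i b)
      exact Complex.zero_le_real.mpr (hcE0 i)
    refine ⟨fun b => (∑ i, (cE i : ℂ) * A i b).re, fun b => ?_, ?_⟩
    · exact (Complex.le_def.mp (hnn b)).1
    · funext j
      have hre : ∀ b, ((∑ i, (cE i : ℂ) * A i b).re : ℂ) = ∑ i, (cE i : ℂ) * A i b := by
        intro b
        have him := (Complex.le_def.mp (hnn b)).2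
        apply Complex.ext
        · simp
        · simp [← him]
      calc x j = 1 * x j := (one_mul _).symm
        _ = (∑ i, (cE i : ℂ) * Q i j) * x j := by rw [← hones j]
        _ = ∑ i, (cE i : ℂ) * (Q i j * x j) := by
            rw [Finset.sum_mul]
            exact Finset.sum_congr rfl fun i _ => mul_assoc _ _ _
        _ = ∑ i, (cE i : ℂ) * (A * Q) i j := by
            refine Finset.sum_congr rfl fun i _ => ?_
            congr 1
            rw [← hQD, Matrix.mul_diagonal]
        _ = ∑ i, (cE i : ℂ) * ∑ b, A i b * Q b j := by
            simp only [Matrix.mul_apply]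
        _ = ∑ b, (∑ i, (cE i : ℂ) * A i b) * Q b j := by
            simp only [Finset.mul_sum, Finset.sum_mul]
            rw [Finset.sum_comm]
            exact Finset.sum_congr rfl fun b _ =>
              Finset.sum_congr rfl fun i _ => (mul_assoc _ _ _).symm
        _ = (∑ b, (((∑ i, (cE i : ℂ) * A i b).re : ℝ) • Q b)) j := by
            rw [Finset.sum_apply]
            refine Finset.sum_congr rfl fun b _ => ?_
            rw [Pi.smul_apply, Complex.real_smul, hre b]
  · rintro ⟨α, hα, hx⟩
    have hdec : ∀ a k, ∃ c : Fin n → ℝ, (∀ b, 0 ≤ c b) ∧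
        ∀ j, Q a j * Q k j = ∑ b, (c b : ℂ) * Q b j := by
      intro a k
      obtain ⟨c, h0, h1⟩ := char_decomp ρ hsimple hdistinct g hgall (ρ a ⊗ ρ k)
      refine ⟨c, h0, fun j => ?_⟩
      have := h1 j
      rwa [FDRep.char_tensor, Pi.mul_apply] at this
    choose c hc0 hc1 using hdec
    set N : Matrix (Fin n) (Fin n) ℂ :=
      Matrix.of fun a b => ((∑ k, α k * c a k b : ℝ) : ℂ) with hN
    have hQD : Q * Matrix.diagonal x = N * Q := by
      ext a j
      rw [Matrix.mul_diagonal, Matrix.mul_apply]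
      have hxj : x j = ∑ k, (α k : ℂ) * Q k j := by
        rw [hx, Finset.sum_apply]
        refine Finset.sum_congr rfl fun k _ => ?_
        rw [Pi.smul_apply, Complex.real_smul]
      rw [hxj, Finset.mul_sum]
      have e1 : ∀ k, Q a j * ((α k : ℂ) * Q k j) = (α k : ℂ) * ∑ b, (c a k b : ℂ) * Q b j := by
        intro k
        rw [← hc1 a k j]; ring
      simp only [e1, Finset.mul_sum]
      rw [Finset.sum_comm]
      refine Finset.sum_congr rfl fun b _ => ?_
      rw [hN]
      simp only [Matrix.of_apply]
      push_cast
      rw [Finset.sum_mul]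
      refine Finset.sum_congr rfl fun k _ => ?_
      ring
    intro a b
    have hfin : Q * Matrix.diagonal x * Q⁻¹ = N := by
      rw [hQD, Matrix.mul_assoc, hQQi, Matrix.mul_one]
    rw [hfin, hN]
    simp only [Matrix.of_apply]
    exact Complex.zero_le_real.mpr (Finset.sum_nonneg fun k _ =>
      mul_nonneg (hα k) (hc0 a k b))
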